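/- Let u ⊆ {1,…,s} be nonempty and k ∈ {0,1,…,m−1}^{|u|}. Then the gain coefficient Γ_{u,k} is either 0 or equal to 2^{m − rank(C_{u,k})}. -/

import Mathlib

open Finset

noncomputable section

/-- The bit vector `i⃗ ∈ F₂^m` of the integer `i = Σ_{ℓ=1}^m i_ℓ 2^{ℓ-1}`. -/
def bvec (m : ℕ) (i : ℕ) : Fin m → ZMod 2 :=
  fun ℓ => if Nat.testBit i ℓ.1 then 1 else 0

/-- The `(r+1)`-st row (i.e. `r` with 0-indexing) of an `m × m` matrix over `F₂`,
as a vector in `F₂^m`; junk value `0` if `r ≥ m` (never used under the hypotheses below). -/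
def rowAt (m : ℕ) (A : Matrix (Fin m) (Fin m) (ZMod 2)) (r : ℕ) : Fin m → ZMod 2 :=
  fun ℓ => if h : r < m then A ⟨r, h⟩ ℓ else 0

/-- The stacked matrix `C_{u,k}`: for each `j ∈ u`, the first `k j` rows of `C j`. -/
def stack {m s : ℕ} (C : Fin s → Matrix (Fin m) (Fin m) (ZMod 2))
    (u : Finset (Fin s)) (k : Fin s → ℕ) :
    Matrix ((j : {x // x ∈ u}) × Fin (k j.1)) (Fin m) (ZMod 2) :=
  fun p => rowAt m (C p.1.1) p.2.1

/-- `∇C_{u,k}`: the matrix whose rows are the `(k j + 1)`-st rows (1-indexed) of `C j`, `j ∈ u`. -/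
def grad {m s : ℕ} (C : Fin s → Matrix (Fin m) (Fin m) (ZMod 2))
    (u : Finset (Fin s)) (k : Fin s → ℕ) :
    Matrix {x // x ∈ u} (Fin m) (ZMod 2) :=
  fun j => rowAt m (C j.1) (k j.1)

/-- The coordinate `x_{ij} ∈ [0,1)` of the digital net generated by `C₁,…,C_s`:
`x_{ij} = Σ_{ℓ=1}^m y_ℓ 2^{-ℓ}` where `y = C_j · i⃗` over `F₂`. -/
def pt {m s : ℕ} (C : Fin s → Matrix (Fin m) (Fin m) (ZMod 2)) (i : ℕ) (j : Fin s) : ℝ :=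
  ∑ ℓ : Fin m, (((C j).mulVec (bvec m i) ℓ).val : ℝ) / 2 ^ (ℓ.1 + 1)

/-- The factor `N`: with `M(x,x') = max{k ∈ ℕ₀ : ⌊2^k x⌋ = ⌊2^k x'⌋}` (the number of matching
leading binary digits), `Nf x x' c` equals `1` if `M(x,x') > c` (equivalently the first `c+1`
binary digits match), `-1` if `M(x,x') = c` (the first `c` digits match but not `c+1`), and
`0` if `M(x,x') < c`. -/
def Nf (x x' : ℝ) (c : ℕ) : ℤ :=
  if ⌊(2:ℝ) ^ (c + 1) * x⌋ = ⌊(2:ℝ) ^ (c + 1) * x'⌋ then 1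
  else if ⌊(2:ℝ) ^ c * x⌋ = ⌊(2:ℝ) ^ c * x'⌋ then -1
  else 0

/-- The gain coefficient `Γ_{u,k} = 2^{-m} Σ_{i=0}^{2^m-1} Σ_{i'=0}^{2^m-1} ∏_{j∈u} N_{i,i',j}`. -/
def Gam {m s : ℕ} (C : Fin s → Matrix (Fin m) (Fin m) (ZMod 2))
    (u : Finset (Fin s)) (k : Fin s → ℕ) : ℚ :=
  (2 ^ m : ℚ)⁻¹ * ∑ i ∈ Finset.range (2 ^ m), ∑ i' ∈ Finset.range (2 ^ m),
      ∏ j ∈ u, (Nf (pt C i j) (pt C i' j) (k j) : ℚ)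

section digits
variable {m : ℕ}

def xval (y : Fin m → ZMod 2) : ℝ := ∑ ℓ : Fin m, ((y ℓ).val : ℝ) / 2 ^ (ℓ.1 + 1)

def bitv (y : Fin m → ZMod 2) (ℓ : ℕ) : ℕ := if h : ℓ < m then (y ⟨ℓ, h⟩).val else 0

def nval (y : Fin m → ZMod 2) (c : ℕ) : ℕ := ∑ ℓ ∈ Finset.range c, bitv y ℓ * 2 ^ (c - 1 - ℓ)

lemma bitv_le (y : Fin m → ZMod 2) (ℓ : ℕ) : bitv y ℓ ≤ 1 := by
  unfold bitv; split
  · have := ZMod.val_lt (y ⟨ℓ, by assumption⟩); omega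
  · omega

lemma geom (n : ℕ) : ∑ t ∈ Finset.range n, ((2:ℝ)⁻¹) ^ (t+1) = 1 - (2:ℝ)⁻¹ ^ n := by
  induction n with
  | zero => simp
  | succ n ih => rw [Finset.sum_range_succ, ih]; ring

lemma floor_xval (y : Fin m → ZMod 2) {c : ℕ} (hc : c ≤ m) :
    ⌊(2:ℝ) ^ c * xval y⌋ = (nval y c : ℤ) := by
  have hx : xval y = ∑ ℓ ∈ Finset.range m, (bitv y ℓ : ℝ) / 2 ^ (ℓ + 1) := by
    rw [xval, ← Fin.sum_univ_eq_sum_range (fun ℓ => (bitv y ℓ : ℝ) / 2 ^ (ℓ + 1))]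
    refine Finset.sum_congr rfl fun ℓ _ => ?_
    simp [bitv, ℓ.isLt]
  have hsplit : (2:ℝ) ^ c * xval y =
      (∑ ℓ ∈ Finset.range c, (bitv y ℓ : ℝ) * ((2:ℝ) ^ c / 2 ^ (ℓ + 1)))
      + ∑ ℓ ∈ Finset.Ico c m, (bitv y ℓ : ℝ) * ((2:ℝ) ^ c / 2 ^ (ℓ + 1)) := by
    rw [hx, Finset.mul_sum, Finset.range_eq_Ico,
      ← Finset.sum_Ico_consecutive _ (Nat.zero_le c) hc, ← Finset.range_eq_Ico]
    congr 1 <;> exact Finset.sum_congr rfl fun x _ => by ring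
  have hA : (∑ ℓ ∈ Finset.range c, (bitv y ℓ : ℝ) * ((2:ℝ) ^ c / 2 ^ (ℓ + 1)))
      = (nval y c : ℝ) := by
    rw [nval]
    push_cast
    refine Finset.sum_congr rfl fun ℓ hℓ => ?_
    have hℓc : ℓ < c := Finset.mem_range.mp hℓ
    have h2 : (2:ℝ) ^ c = 2 ^ (c - 1 - ℓ) * 2 ^ (ℓ + 1) := by
      rw [← pow_add]; congr 1; omega
    rw [h2, mul_div_assoc, div_self (by positivity), mul_one]
  set r : ℝ := ∑ ℓ ∈ Finset.Ico c m, (bitv y ℓ : ℝ) * ((2:ℝ) ^ c / 2 ^ (ℓ + 1)) with hr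
  have hr0 : 0 ≤ r := by positivity
  have hr1 : r < 1 := by
    have hb : r ≤ ∑ ℓ ∈ Finset.Ico c m, ((2:ℝ) ^ c / 2 ^ (ℓ + 1)) := by
      refine Finset.sum_le_sum fun ℓ _ => ?_
      have h1 : (bitv y ℓ : ℝ) ≤ 1 := by exact_mod_cast bitv_le y ℓ
      have h2 : (0:ℝ) ≤ (2:ℝ) ^ c / 2 ^ (ℓ + 1) := by positivity
      nlinarith
    have hgeo : ∑ ℓ ∈ Finset.Ico c m, ((2:ℝ) ^ c / 2 ^ (ℓ + 1))
        = 1 - (2:ℝ)⁻¹ ^ (m - c) := by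
      rw [Finset.sum_Ico_eq_sum_range, ← geom (m - c)]
      refine Finset.sum_congr rfl fun t _ => ?_
      have h2 : (2:ℝ) ^ (c + t + 1) = 2 ^ c * 2 ^ (t + 1) := by
        rw [← pow_add, Nat.add_assoc]
      rw [h2, inv_pow, div_mul_eq_div_div, div_self (by positivity), one_div]
    have hpos : (0:ℝ) < (2:ℝ)⁻¹ ^ (m - c) := by positivity
    calc r ≤ _ := hb
      _ = 1 - (2:ℝ)⁻¹ ^ (m - c) := hgeo
      _ < 1 := by linarith
  rw [hsplit, hA]
  rw [Int.floor_eq_iff]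
  constructor
  · push_cast; linarith
  · push_cast; linarith

lemma nval_succ (y : Fin m → ZMod 2) (c : ℕ) :
    nval y (c + 1) = 2 * nval y c + bitv y c := by
  unfold nval
  rw [Finset.sum_range_succ, Finset.mul_sum]
  have h1 : bitv y c * 2 ^ (c + 1 - 1 - c) = bitv y c := by
    have : c + 1 - 1 - c = 0 := by omega
    rw [this, pow_zero, mul_one]
  rw [h1]
  congr 1
  refine Finset.sum_congr rfl fun ℓ hℓ => ?_
  have hℓc : ℓ < c := Finset.mem_range.mp hℓ
  have : c + 1 - 1 - ℓ = (c - 1 - ℓ) + 1 := by omega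
  rw [this, pow_succ]
  ring

lemma nval_eq_iff (y y' : Fin m → ZMod 2) (c : ℕ) :
    nval y c = nval y' c ↔ ∀ ℓ, ℓ < c → bitv y ℓ = bitv y' ℓ := by
  induction c with
  | zero => simp [nval]
  | succ c ih =>
    rw [nval_succ, nval_succ]
    constructor
    · intro h
      have hb := bitv_le y c; have hb' := bitv_le y' c
      have h1 : bitv y c = bitv y' c := by omega
      have h2 : nval y c = nval y' c := by omega
      intro ℓ hℓ
      rcases Nat.lt_or_ge ℓ c with h3 | h3
      · exact ih.mp h2 ℓ h3
      · have : ℓ = c := by omega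
        rw [this]; exact h1
    · intro h
      have h2 : nval y c = nval y' c := ih.mpr fun ℓ hℓ => h ℓ (by omega)
      rw [h2, h c (by omega)]

lemma val2_inj : ∀ a b : ZMod 2, a.val = b.val → a = b := by decide

lemma floor_eq_iff_digits (y y' : Fin m → ZMod 2) {c : ℕ} (hc : c ≤ m) :
    ⌊(2:ℝ) ^ c * xval y⌋ = ⌊(2:ℝ) ^ c * xval y'⌋ ↔
      ∀ ℓ : Fin m, ℓ.1 < c → y ℓ = y' ℓ := by
  rw [floor_xval y hc, floor_xval y' hc, Int.natCast_inj, nval_eq_iff]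
  constructor
  · intro h ℓ hℓ
    have := h ℓ.1 hℓ
    simp only [bitv, ℓ.isLt, dif_pos] at this
    exact val2_inj _ _ (by simpa using this)
  · intro h ℓ hℓ
    have hℓm : ℓ < m := lt_of_lt_of_le hℓ hc
    simp only [bitv, hℓm, dif_pos]
    rw [h ⟨ℓ, hℓm⟩ hℓ]

end digits

section signs

def sgn (a : ZMod 2) : ℚ := if a = 0 then 1 else -1

lemma zmod2_cases (a : ZMod 2) : a = 0 ∨ a = 1 := by revert a; decide

lemma zmod2_eq_iff_add : ∀ a b : ZMod 2, (a = b ↔ a + b = 0) := by decide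

lemma sgn_add (a b : ZMod 2) : sgn (a + b) = sgn a * sgn b := by
  rcases zmod2_cases a with ha | ha <;> rcases zmod2_cases b with hb | hb <;>
    subst ha <;> subst hb <;>
    simp [sgn, show (1 + 1 : ZMod 2) = 0 by decide, show (1 : ZMod 2) ≠ 0 by decide]

lemma sgn_add_one (a : ZMod 2) : sgn (a + 1) = - sgn a := by
  rcases zmod2_cases a with ha | ha <;> subst ha <;>
    simp [sgn, show (1 + 1 : ZMod 2) = 0 by decide, show (1 : ZMod 2) ≠ 0 by decide]

lemma prod_sgn {ι : Type*} (t : Finset ι) (f : ι → ZMod 2) :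
    ∏ j ∈ t, sgn (f j) = sgn (∑ j ∈ t, f j) := by
  classical
  induction t using Finset.induction_on with
  | empty => simp [sgn]
  | insert a s h ih => rw [Finset.prod_insert h, Finset.sum_insert h, sgn_add, ih]

end signs

section bv

lemma bvec_injOn {m : ℕ} : ∀ i ∈ Finset.range (2 ^ m), ∀ i' ∈ Finset.range (2 ^ m),
    bvec m i = bvec m i' → i = i' := by
  intro i hi i' hi' h
  rw [Finset.mem_range] at hi hi'
  apply Nat.eq_of_testBit_eq
  intro ℓ
  rcases Nat.lt_or_ge ℓ m with hℓ | hℓ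
  · have h2 := congrFun h ⟨ℓ, hℓ⟩
    simp only [bvec] at h2
    by_cases hb : i.testBit ℓ <;> by_cases hb' : i'.testBit ℓ <;>
      simp_all [show (1 : ZMod 2) ≠ 0 by decide]
  · have h1 : i < 2 ^ ℓ := lt_of_lt_of_le hi (Nat.pow_le_pow_right (by norm_num) hℓ)
    have h2 : i' < 2 ^ ℓ := lt_of_lt_of_le hi' (Nat.pow_le_pow_right (by norm_num) hℓ)
    rw [Nat.testBit_lt_two_pow h1, Nat.testBit_lt_two_pow h2]

lemma sum_bvec {m : ℕ} (H : (Fin m → ZMod 2) → ℚ) :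
    ∑ i ∈ Finset.range (2 ^ m), H (bvec m i) = ∑ d : Fin m → ZMod 2, H d := by
  classical
  have himg : (Finset.range (2 ^ m)).image (bvec m) = Finset.univ := by
    apply Finset.eq_univ_of_card
    rw [Finset.card_image_of_injOn (fun a ha b hb => bvec_injOn a ha b hb),
      Finset.card_range]
    simp [Fintype.card_fun]
  rw [show (Finset.univ : Finset (Fin m → ZMod 2)) = _ from himg.symm,
    Finset.sum_image bvec_injOn]

end bv


section main

variable {m s : ℕ}

def Pred (C : Fin s → Matrix (Fin m) (Fin m) (ZMod 2)) (u : Finset (Fin s)) (k : Fin s → ℕ)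
    (d : Fin m → ZMod 2) : Prop :=
  ∀ j ∈ u, ∀ ℓ : Fin m, ℓ.1 < k j → (C j).mulVec d ℓ = 0

def phi (C : Fin s → Matrix (Fin m) (Fin m) (ZMod 2)) (u : Finset (Fin s)) (k : Fin s → ℕ)
    (d : Fin m → ZMod 2) : ZMod 2 :=
  ∑ j ∈ u.attach, (grad C u k).mulVec d j

open Classical in
def Ff (C : Fin s → Matrix (Fin m) (Fin m) (ZMod 2)) (u : Finset (Fin s)) (k : Fin s → ℕ)
    (d : Fin m → ZMod 2) : ℚ :=
  if Pred C u k d then sgn (phi C u k d) else 0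

lemma grad_mulVec (C : Fin s → Matrix (Fin m) (Fin m) (ZMod 2)) (u : Finset (Fin s))
    (k : Fin s → ℕ) (d : Fin m → ZMod 2) (j : {x // x ∈ u}) (hj : k j.1 < m) :
    (grad C u k).mulVec d j = (C j.1).mulVec d ⟨k j.1, hj⟩ := by
  simp [grad, rowAt, Matrix.mulVec, dotProduct, hj]

lemma phi_add (C : Fin s → Matrix (Fin m) (Fin m) (ZMod 2)) (u : Finset (Fin s))
    (k : Fin s → ℕ) (a b : Fin m → ZMod 2) :
    phi C u k (a + b) = phi C u k a + phi C u k b := by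
  simp [phi, Matrix.mulVec_add, Finset.sum_add_distrib]

end main

theorem statement (m s : ℕ) (hm : 1 ≤ m) (hs : 1 ≤ s)
    (C : Fin s → Matrix (Fin m) (Fin m) (ZMod 2))
    (u : Finset (Fin s)) (hu : u.Nonempty)
    (k : Fin s → ℕ) (hk : ∀ j ∈ u, k j ≤ m - 1) :
    Gam C u k = 0 ∨ Gam C u k = (2 : ℚ) ^ (m - (stack C u k).rank) := by
  classical
  have hkm : ∀ j ∈ u, k j < m := fun j hj => by have := hk j hj; omega
  -- Step 1: pointwise product identity
  have key : ∀ i i' : ℕ,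
      ∏ j ∈ u, (Nf (pt C i j) (pt C i' j) (k j) : ℚ) = Ff C u k (bvec m i + bvec m i') := by
    intro i i'
    set d := bvec m i + bvec m i' with hd
    have hptx : ∀ (j : Fin s), ∀ c ≤ m,
        (⌊(2:ℝ) ^ c * pt C i j⌋ = ⌊(2:ℝ) ^ c * pt C i' j⌋ ↔
          ∀ ℓ : Fin m, ℓ.1 < c → (C j).mulVec d ℓ = 0) := by
      intro j c hc
      have h1 : pt C i j = xval ((C j).mulVec (bvec m i)) := rfl
      have h2 : pt C i' j = xval ((C j).mulVec (bvec m i')) := rfl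
      rw [h1, h2, floor_eq_iff_digits _ _ hc]
      refine forall_congr' fun ℓ => imp_congr_right fun hℓ => ?_
      rw [hd, Matrix.mulVec_add, Pi.add_apply]
      exact zmod2_eq_iff_add _ _
    have hfac : ∀ j : {x // x ∈ u},
        (Nf (pt C i j.1) (pt C i' j.1) (k j.1) : ℚ) =
          if (∀ ℓ : Fin m, ℓ.1 < k j.1 → (C j.1).mulVec d ℓ = 0)
          then sgn ((grad C u k).mulVec d j) else 0 := by
      intro j
      have hkj : k j.1 < m := hkm j.1 j.2
      have hA := hptx j.1 (k j.1 + 1) (by omega)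
      have hB := hptx j.1 (k j.1) (by omega)
      have hg := grad_mulVec C u k d j hkj
      by_cases hcond : ∀ ℓ : Fin m, ℓ.1 < k j.1 → (C j.1).mulVec d ℓ = 0
      · rw [if_pos hcond]
        by_cases hg0 : (C j.1).mulVec d ⟨k j.1, hkj⟩ = 0
        · have hA' : ⌊(2:ℝ) ^ (k j.1 + 1) * pt C i j.1⌋ = ⌊(2:ℝ) ^ (k j.1 + 1) * pt C i' j.1⌋ := by
            apply hA.mpr
            intro ℓ hℓ
            rcases Nat.lt_or_ge ℓ.1 (k j.1) with h3 | h3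
            · exact hcond ℓ h3
            · have : ℓ = ⟨k j.1, hkj⟩ := Fin.ext (show ℓ.1 = k j.1 by omega)
              rw [this]; exact hg0
          simp [Nf, hA', hg, sgn, hg0]
        · have hA' : ¬ ⌊(2:ℝ) ^ (k j.1 + 1) * pt C i j.1⌋ = ⌊(2:ℝ) ^ (k j.1 + 1) * pt C i' j.1⌋ :=
            fun h => hg0 (hA.mp h ⟨k j.1, hkj⟩ (show k j.1 < k j.1 + 1 by omega))
          have hB' : ⌊(2:ℝ) ^ (k j.1) * pt C i j.1⌋ = ⌊(2:ℝ) ^ (k j.1) * pt C i' j.1⌋ :=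
            hB.mpr hcond
          simp [Nf, hA', hB', hg, sgn, hg0]
      · rw [if_neg hcond]
        have hB' : ¬ ⌊(2:ℝ) ^ (k j.1) * pt C i j.1⌋ = ⌊(2:ℝ) ^ (k j.1) * pt C i' j.1⌋ :=
          fun h => hcond (hB.mp h)
        have hA' : ¬ ⌊(2:ℝ) ^ (k j.1 + 1) * pt C i j.1⌋ = ⌊(2:ℝ) ^ (k j.1 + 1) * pt C i' j.1⌋ :=
          fun h => hcond fun ℓ hℓ => hA.mp h ℓ (show ℓ.1 < k j.1 + 1 by omega)
        simp [Nf, hA', hB']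
    rw [← Finset.prod_attach u (fun j => (Nf (pt C i j) (pt C i' j) (k j) : ℚ)),
      Finset.prod_congr rfl (fun j _ => hfac j)]
    by_cases hPd : Pred C u k d
    · rw [Finset.prod_congr rfl (fun j _ => if_pos fun ℓ hℓ => hPd j.1 j.2 ℓ hℓ),
        prod_sgn, Ff, if_pos hPd, phi]
    · rw [Ff, if_neg hPd]
      simp only [Pred] at hPd
      push_neg at hPd
      obtain ⟨j, hj, ℓ, hℓ, hne⟩ := hPd
      refine Finset.prod_eq_zero (Finset.mem_attach _ ⟨j, hj⟩) ?_
      rw [if_neg]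
      push_neg
      exact ⟨ℓ, hℓ, hne⟩
  -- Step 2: Gam equals the full sum S
  set S : ℚ := ∑ d : Fin m → ZMod 2, Ff C u k d with hS
  have hGam : Gam C u k = S := by
    rw [Gam]
    have hinner : ∀ i : ℕ,
        ∑ i' ∈ Finset.range (2 ^ m), ∏ j ∈ u, (Nf (pt C i j) (pt C i' j) (k j) : ℚ) = S := by
      intro i
      calc ∑ i' ∈ Finset.range (2 ^ m), ∏ j ∈ u, (Nf (pt C i j) (pt C i' j) (k j) : ℚ)
          = ∑ i' ∈ Finset.range (2 ^ m), Ff C u k (bvec m i + bvec m i') :=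
            Finset.sum_congr rfl fun i' _ => key i i'
        _ = ∑ d : Fin m → ZMod 2, Ff C u k (bvec m i + d) :=
            sum_bvec (fun v => Ff C u k (bvec m i + v))
        _ = S := Fintype.sum_equiv (Equiv.addLeft (bvec m i)) _ _ (fun d => rfl)
    rw [Finset.sum_congr rfl (fun i _ => hinner i), Finset.sum_const, Finset.card_range,
      nsmul_eq_mul, ← mul_assoc]
    push_cast
    rw [inv_mul_cancel₀ (by positivity), one_mul]
  -- Step 3: Pred is the kernel of the stacked matrix
  have hPker : ∀ d, Pred C u k d ↔ (stack C u k).mulVecLin d = 0 := by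
    intro d
    rw [Matrix.mulVecLin_apply]
    constructor
    · intro h
      funext p
      obtain ⟨j, r⟩ := p
      have hrm : r.1 < m := lt_of_lt_of_le r.isLt (le_of_lt (hkm j.1 j.2))
      have heq : (stack C u k).mulVec d ⟨j, r⟩ = (C j.1).mulVec d ⟨r.1, hrm⟩ := by
        simp [stack, rowAt, Matrix.mulVec, dotProduct, hrm]
      show (stack C u k).mulVec d ⟨j, r⟩ = 0
      rw [heq]
      exact h j.1 j.2 ⟨r.1, hrm⟩ r.isLt
    · intro h j hj ℓ hℓ
      have h2 := congrFun h ⟨⟨j, hj⟩, ⟨ℓ.1, hℓ⟩⟩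
      have heq : (stack C u k).mulVec d ⟨⟨j, hj⟩, ⟨ℓ.1, hℓ⟩⟩ = (C j).mulVec d ⟨ℓ.1, ℓ.isLt⟩ := by
        simp [stack, rowAt, Matrix.mulVec, dotProduct, ℓ.isLt]
      rw [heq] at h2
      simpa using h2
  -- Step 4: rank-nullity
  have hrank : Module.finrank (ZMod 2) (LinearMap.ker (stack C u k).mulVecLin)
      = m - (stack C u k).rank := by
    have h1 := LinearMap.finrank_range_add_finrank_ker ((stack C u k).mulVecLin)
    have h2 : Module.finrank (ZMod 2) (Fin m → ZMod 2) = m := by simp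
    rw [h2] at h1
    have h3 : (stack C u k).rank
        = Module.finrank (ZMod 2) (LinearMap.range (stack C u k).mulVecLin) := rfl
    omega
  by_cases hall : ∀ d, Pred C u k d → phi C u k d = 0
  · right
    have h1 : S = ∑ d : Fin m → ZMod 2, if Pred C u k d then (1:ℚ) else 0 := by
      refine Finset.sum_congr rfl fun d _ => ?_
      by_cases h : Pred C u k d
      · simp [Ff, h, hall d h, sgn]
      · simp [Ff, h]
    have hc : (Finset.univ.filter (Pred C u k)).card
        = Fintype.card (LinearMap.ker (stack C u k).mulVecLin) := by
      rw [← Fintype.card_subtype]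
      exact Fintype.card_congr (Equiv.subtypeEquivRight fun d =>
        (hPker d).trans (LinearMap.mem_ker).symm)
    have hcard : Fintype.card (LinearMap.ker (stack C u k).mulVecLin)
        = 2 ^ (m - (stack C u k).rank) := by
      rw [Module.card_eq_pow_finrank (K := ZMod 2), ZMod.card, hrank]
    rw [hGam, h1, Finset.sum_boole, hc, hcard]
    push_cast
    ring
  · left
    push_neg at hall
    obtain ⟨d₀, hd₀P, hd₀φ⟩ := hall
    have hφ1 : phi C u k d₀ = 1 := by
      rcases zmod2_cases (phi C u k d₀) with h | h
      · exact absurd h hd₀φ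
      · exact h
    have hd0ker : (stack C u k).mulVecLin d₀ = 0 := (hPker d₀).mp hd₀P
    have hPshift : ∀ d, Pred C u k (d + d₀) ↔ Pred C u k d := by
      intro d
      rw [hPker, hPker, map_add, hd0ker, add_zero]
    have hflip : ∀ d, Ff C u k (d + d₀) = - Ff C u k d := by
      intro d
      by_cases h : Pred C u k d
      · rw [Ff, Ff, if_pos ((hPshift d).mpr h), if_pos h, phi_add, hφ1, sgn_add_one]
      · rw [Ff, Ff, if_neg (fun h2 => h ((hPshift d).mp h2)), if_neg h, neg_zero]
    have hSneg : S = -S := by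
      calc S = ∑ d : Fin m → ZMod 2, Ff C u k (d + d₀) :=
          (Fintype.sum_equiv (Equiv.addRight d₀) _ _ (fun d => rfl)).symm
        _ = ∑ d : Fin m → ZMod 2, - Ff C u k d := Finset.sum_congr rfl fun d _ => hflip d
        _ = -S := by rw [hS, Finset.sum_neg_distrib]
    rw [hGam]
    linarith


end
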